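/- Let R be a 2×2 unitary matrix with det R = 1 and let U be a 2×2 unitary matrix with det U = ω^k for some integer k, where ω = e^{iπ/4}. If there exists a unit scalar λ with ‖R − λU‖ ≤ ε, then there exists an integer n such that ‖R − e^{inπ/8} U‖ ≤ ε. -/

import Mathlib

noncomputable def ω : ℂ := (1 + Complex.I) / (Real.sqrt 2 : ℂ)

open scoped InnerProductSpace ComplexConjugate

private theorem omega_exp : ω = Complex.exp (Real.pi / 4 * Complex.I) := by
  rw [Complex.exp_mul_I, ω]
  rw [show ((Real.pi : ℂ) / 4) = ((Real.pi / 4 : ℝ) : ℂ) by push_cast; ring]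
  rw [← Complex.ofReal_cos, ← Complex.ofReal_sin, Real.cos_pi_div_four, Real.sin_pi_div_four]
  have h2 : (Real.sqrt 2 : ℂ) ≠ 0 := by simp [Real.sqrt_eq_zero']
  have hsq : (Real.sqrt 2 : ℂ) ^ 2 = 2 := by
    rw [← Complex.ofReal_pow, Real.sq_sqrt (by norm_num : (2:ℝ) ≥ 0)]; norm_num
  field_simp
  ring_nf
  push_cast; linear_combination (-(1 + Complex.I) / 2) * hsq

private theorem ch2 (W : Matrix (Fin 2) (Fin 2) ℂ) (hW : W ∈ Matrix.unitaryGroup (Fin 2) ℂ) :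
    W + W.det • star W = W.trace • 1 := by
  have hadj : W.adjugate = W.trace • 1 - W := by
    ext i j
    fin_cases i <;> fin_cases j <;>
      simp [Matrix.adjugate_fin_two, Matrix.trace_fin_two, Matrix.one_apply]
  have h1 : W * (W.trace • 1 - W) = W.det • 1 := by
    rw [← hadj, Matrix.mul_adjugate]
  have hsW : star W * W = 1 := hW.1
  have h2 := congrArg (fun M => star W * M) h1
  simp only [Matrix.mul_sub, Matrix.mul_smul, ← Matrix.mul_assoc, hsW] at h2
  simp only [Matrix.one_mul, Matrix.mul_one] at h2
  have h3 : W.trace • (1 : Matrix (Fin 2) (Fin 2) ℂ) - W = W.det • star W := by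
    rw [← h2]
  rw [← h3]; abel

set_option maxHeartbeats 1000000 in
/-- If R is unitary with det R = 1 and U is unitary with det U = ω^k, and ‖R − λU‖ ≤ ε for
    some unit scalar λ, then ‖R − e^{inπ/8} U‖ ≤ ε for some integer n. -/
theorem discrete_phase (R U : Matrix (Fin 2) (Fin 2) ℂ)
    (hR : R ∈ Matrix.unitaryGroup (Fin 2) ℂ)
    (hU : U ∈ Matrix.unitaryGroup (Fin 2) ℂ)
    (hdetR : R.det = 1) (k : ℤ) (hdetU : U.det = ω ^ k)
    (ε : ℝ) (hε : 0 < ε)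
    (h : ∃ lam : ℂ, ‖lam‖ = 1 ∧
      ‖Matrix.toEuclideanCLM (𝕜 := ℂ) (R - lam • U)‖ ≤ ε) :
    ∃ n : ℤ, ‖Matrix.toEuclideanCLM (𝕜 := ℂ)
        (R - Complex.exp (n * Real.pi * Complex.I / 8) • U)‖ ≤ ε := by
  obtain ⟨lam, hlam1, hlam⟩ := h
  set f := Matrix.toEuclideanCLM (𝕜 := ℂ) (n := Fin 2) with hf
  set W := star R * U with hWdef
  have hWu : W ∈ Matrix.unitaryGroup (Fin 2) ℂ := mul_mem (Unitary.star_mem hR) hU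
  have hch := ch2 W hWu
  set d := W.det with hddef
  set s := W.trace with hsdef
  -- inner product identity
  have hC : ∀ x : EuclideanSpace ℂ (Fin 2),
      ⟪x, f W x⟫_ℂ + d * conj ⟪x, f W x⟫_ℂ = s * (‖x‖ : ℂ)^2 := by
    intro x
    have := congrArg f hch
    simp only [map_add, map_smul, map_star, map_one] at this
    have h2 := congrArg (fun T => ⟪x, T x⟫_ℂ) this
    simp only [ContinuousLinearMap.add_apply, ContinuousLinearMap.smul_apply,
      ContinuousLinearMap.one_apply, inner_add_right, inner_smul_right,
      ContinuousLinearMap.star_eq_adjoint, ContinuousLinearMap.adjoint_inner_right,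
      inner_self_eq_norm_sq_to_K, ← inner_conj_symm x (f W x)] at h2
    rw [show ⟪x, (f W) x⟫_ℂ = conj ⟪(f W) x, x⟫_ℂ from (inner_conj_symm _ _).symm,
      Complex.conj_conj]
    exact h2
  -- norm formula
  have hN : ∀ γ : ℂ, ‖γ‖ = 1 → ∀ x : EuclideanSpace ℂ (Fin 2),
      ‖(f (R - γ • U)) x‖^2 = 2*‖x‖^2 - 2*(γ * ⟪x, f W x⟫_ℂ).re := by
    intro γ hγ x
    have hA : star (f R) * f R = 1 := by rw [← map_star, ← map_mul, hR.1, map_one]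
    have hB : star (f U) * f U = 1 := by rw [← map_star, ← map_mul, hU.1, map_one]
    have hnA : ‖f R x‖ = ‖x‖ := by
      have h1 : RCLike.re ⟪f R x, f R x⟫_ℂ = RCLike.re ⟪x, x⟫_ℂ := by
        rw [show ⟪f R x, f R x⟫_ℂ = ⟪x, (star (f R) * f R) x⟫_ℂ by
          rw [ContinuousLinearMap.mul_apply, ContinuousLinearMap.star_eq_adjoint,
            ContinuousLinearMap.adjoint_inner_right], hA, ContinuousLinearMap.one_apply]
      have := inner_self_eq_norm_sq (𝕜 := ℂ) (f R x)
      rw [h1, inner_self_eq_norm_sq] at this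
      nlinarith [norm_nonneg (f R x), norm_nonneg x]
    have hnB : ‖f U x‖ = ‖x‖ := by
      have h1 : RCLike.re ⟪f U x, f U x⟫_ℂ = RCLike.re ⟪x, x⟫_ℂ := by
        rw [show ⟪f U x, f U x⟫_ℂ = ⟪x, (star (f U) * f U) x⟫_ℂ by
          rw [ContinuousLinearMap.mul_apply, ContinuousLinearMap.star_eq_adjoint,
            ContinuousLinearMap.adjoint_inner_right], hB, ContinuousLinearMap.one_apply]
      have := inner_self_eq_norm_sq (𝕜 := ℂ) (f U x)
      rw [h1, inner_self_eq_norm_sq] at this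
      nlinarith [norm_nonneg (f U x), norm_nonneg x]
    have happ : (f (R - γ • U)) x = f R x - γ • f U x := by
      simp [map_sub, map_smul]
    rw [happ, norm_sub_sq (𝕜 := ℂ)]
    rw [inner_smul_right]
    have hip : ⟪f R x, f U x⟫_ℂ = ⟪x, f W x⟫_ℂ := by
      rw [hWdef, map_mul, map_star, ContinuousLinearMap.mul_apply,
        ContinuousLinearMap.star_eq_adjoint, ContinuousLinearMap.adjoint_inner_right]
    rw [hip, norm_smul, hγ, hnA, hnB]
    simp [RCLike.re_to_complex, Complex.mul_re]
    ring
  -- trace relation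
  have htr : s + d * conj s = 2 * s := by
    have h1 := congrArg Matrix.trace hch
    simp only [Matrix.trace_add, Matrix.trace_smul, Matrix.trace_one, smul_eq_mul,
      Matrix.star_eq_conjTranspose, Matrix.trace_conjTranspose, Fintype.card_fin] at h1
    rw [Complex.star_def, ← hsdef] at h1
    push_cast at h1
    linear_combination h1
  have hds : conj s = conj d * s := by
    have h1 : d * conj s = s := by linear_combination htr - s
    calc conj s = conj (d * conj s) := by rw [h1]
    _ = conj d * s := by simp [map_mul]
  -- determinant value
  have hd : d = ω ^ k := by
    rw [hddef, hWdef, Matrix.det_mul, Matrix.star_eq_conjTranspose,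
      Matrix.det_conjTranspose, hdetR, hdetU]
    simp
  -- square root μ of conj d
  set μ₀ := Complex.exp (-(k:ℂ) * Real.pi * Complex.I / 8) with hμ₀def
  have hdexp : d = Complex.exp (((k * Real.pi / 4 : ℝ) : ℂ) * Complex.I) := by
    rw [hd, omega_exp, ← Complex.exp_int_mul]
    congr 1
    push_cast
    ring
  have hconjd : conj d = Complex.exp ((-(k * Real.pi / 4 : ℝ) : ℂ) * Complex.I) := by
    rw [hdexp, ← Complex.exp_conj]
    congr 1
    simp only [map_mul, map_div₀, map_ofNat, map_intCast, Complex.conj_ofReal, Complex.conj_I]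
    push_cast
    ring
  have hμ₀sq : μ₀ ^ 2 = conj d := by
    rw [hconjd, hμ₀def, ← Complex.exp_nat_mul]
    congr 1
    push_cast
    ring
  have hμ₀abs : ‖μ₀‖ = 1 := by
    have harg : -(k:ℂ) * Real.pi * Complex.I / 8 = ((-(k * Real.pi) / 8 : ℝ) : ℂ) * Complex.I := by
      push_cast
      ring
    rw [hμ₀def, harg, Complex.norm_exp]
    simp
  obtain ⟨n, μ, hμexp, hμsq, hμabs, hμre⟩ : ∃ (n : ℤ) (μ : ℂ),
      μ = Complex.exp ((n : ℂ) * Real.pi * Complex.I / 8) ∧ μ^2 = conj d ∧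
      ‖μ‖ = 1 ∧ 0 ≤ (μ * s).re := by
    by_cases hsign : 0 ≤ (μ₀ * s).re
    · refine ⟨-k, μ₀, ?_, hμ₀sq, hμ₀abs, hsign⟩
      rw [hμ₀def]; congr 1; push_cast; ring
    · refine ⟨8 - k, -μ₀, ?_, by rw [neg_sq]; exact hμ₀sq, by simpa using hμ₀abs, ?_⟩
      · have : Complex.exp (((8 - k : ℤ) : ℂ) * Real.pi * Complex.I / 8) =
            Complex.exp (Real.pi * Complex.I) * μ₀ := by
          rw [hμ₀def, ← Complex.exp_add]; congr 1; push_cast; ring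
        rw [this, Complex.exp_pi_mul_I]; ring
      · have : (-μ₀ * s).re = -((μ₀ * s).re) := by
          simp [neg_mul]
        rw [this]; linarith [not_le.mp hsign]
  -- μ * s is real nonneg, equal to |s|
  set rr := ‖s‖ with hrrdef
  have hμd : μ * d = conj μ := by
    have hcd : d = (conj μ)^2 := by
      have h9 := congrArg conj hμsq
      simpa [map_pow] using h9.symm
    rw [hcd]
    have : μ * conj μ = 1 := by
      rw [Complex.mul_conj, Complex.normSq_eq_norm_sq, hμabs]
      norm_num
    calc μ * conj μ ^ 2 = (μ * conj μ) * conj μ := by ring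
    _ = conj μ := by rw [this]; ring
  have hμs : μ * s = (rr : ℂ) := by
    have hreal : conj (μ * s) = μ * s := by
      calc conj (μ * s) = conj μ * conj s := by simp [map_mul]
      _ = conj μ * (conj d * s) := by rw [hds]
      _ = (μ * d) * (conj d * s) := by rw [hμd]
      _ = (d * conj d) * (μ * s) := by ring
      _ = μ * s := by
          have : d * conj d = 1 := by
            have habsd : ‖d‖ = 1 := by
              have h9 : ‖μ^2‖ = ‖conj d‖ := by rw [hμsq]
              rw [norm_pow, hμabs, Complex.norm_conj] at h9
              simpa using h9.symm
            rw [Complex.mul_conj, Complex.normSq_eq_norm_sq, habsd]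
            norm_num
          rw [this]; ring
    have him : (μ * s).im = 0 := by
      have := Complex.conj_eq_iff_im.mp hreal
      exact this
    have habs : ‖μ * s‖ = rr := by
      rw [norm_mul, hμabs, one_mul]
    have : μ * s = ((μ * s).re : ℂ) := Complex.ext rfl (by simp [him])
    rw [this]
    congr 1
    rw [← habs, Complex.norm_def, Complex.normSq_apply, him]
    rw [show (μ*s).re * (μ*s).re + 0 * 0 = ((μ*s).re)^2 by ring, Real.sqrt_sq hμre]
  -- pointwise norm identity for μ
  have hkey : ∀ x : EuclideanSpace ℂ (Fin 2), 2*(μ * ⟪x, f W x⟫_ℂ).re = rr * ‖x‖^2 := by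
    intro x
    have h1 := hC x
    have h2 : μ * ⟪x, f W x⟫_ℂ + conj (μ * ⟪x, f W x⟫_ℂ) = (rr : ℂ) * (‖x‖:ℂ)^2 := by
      calc μ * ⟪x, f W x⟫_ℂ + conj (μ * ⟪x, f W x⟫_ℂ)
          = μ * ⟪x, f W x⟫_ℂ + (μ * d) * conj ⟪x, f W x⟫_ℂ := by
            rw [hμd]; simp [map_mul]
      _ = μ * (⟪x, f W x⟫_ℂ + d * conj ⟪x, f W x⟫_ℂ) := by ring
      _ = μ * (s * (‖x‖:ℂ)^2) := by rw [h1]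
      _ = (μ * s) * (‖x‖:ℂ)^2 := by ring
      _ = (rr : ℂ) * (‖x‖:ℂ)^2 := by rw [hμs]
    rw [Complex.add_conj] at h2
    rw [show ((rr:ℂ) * (‖x‖:ℂ)^2) = ((rr * ‖x‖^2 : ℝ) : ℂ) by push_cast; ring] at h2
    exact_mod_cast h2
  have hμnorm : ‖μ‖ = 1 := by rw [hμabs]
  have hEq : ∀ x : EuclideanSpace ℂ (Fin 2),
      ‖(f (R - μ • U)) x‖^2 = (2 - rr) * ‖x‖^2 := by
    intro x
    rw [hN μ hμnorm x]
    linear_combination -hkey x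
  -- 2 - rr ≥ 0
  have h2rr : 0 ≤ 2 - rr := by
    have h9 := hEq (EuclideanSpace.single 0 1)
    rw [EuclideanSpace.norm_single, norm_one] at h9
    have hpos : (0:ℝ) ≤ ‖(f (R - μ • U)) (EuclideanSpace.single (0 : Fin 2) (1:ℂ))‖^2 :=
      sq_nonneg _
    rw [h9] at hpos
    nlinarith
  -- upper bound
  have hupper : ‖f (R - μ • U)‖ ≤ Real.sqrt (2 - rr) := by
    apply ContinuousLinearMap.opNorm_le_bound _ (Real.sqrt_nonneg _)
    intro x
    apply le_of_eq
    calc ‖(f (R - μ • U)) x‖ = Real.sqrt (‖(f (R - μ • U)) x‖^2) :=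
          (Real.sqrt_sq (norm_nonneg _)).symm
    _ = Real.sqrt ((2 - rr) * ‖x‖^2) := by rw [hEq x]
    _ = Real.sqrt (2 - rr) * Real.sqrt (‖x‖^2) := Real.sqrt_mul h2rr _
    _ = Real.sqrt (2 - rr) * ‖x‖ := by rw [Real.sqrt_sq (norm_nonneg _)]
  -- trace via entries
  have htrent : ⟪EuclideanSpace.single (0:Fin 2) (1:ℂ), f W (EuclideanSpace.single 0 1)⟫_ℂ +
      ⟪EuclideanSpace.single (1:Fin 2) (1:ℂ), f W (EuclideanSpace.single 1 1)⟫_ℂ = s := by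
    have h0 : ∀ i : Fin 2, f W (EuclideanSpace.single i 1) =
        (WithLp.equiv 2 (Fin 2 → ℂ)).symm (W.mulVec (Pi.single i 1)) := by
      intro i
      rw [show (EuclideanSpace.single i (1:ℂ)) =
        (WithLp.equiv 2 (Fin 2 → ℂ)).symm (Pi.single i 1) from rfl]
      rw [hf]; rfl
    rw [h0, h0, hsdef]
    simp [EuclideanSpace.inner_single_left, Matrix.mulVec_single, Matrix.trace_fin_two]
  -- lower bound: some basis vector has small Re(lam * c)
  have hlow : ∃ i : Fin 2,
      (lam * ⟪EuclideanSpace.single i (1:ℂ), f W (EuclideanSpace.single i 1)⟫_ℂ).re ≤ rr / 2 := by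
    by_contra hcon
    push_neg at hcon
    have h0 := hcon 0
    have h1 := hcon 1
    have hsum : (lam * s).re ≤ rr := by
      calc (lam * s).re ≤ ‖lam * s‖ := Complex.re_le_norm _
      _ = rr := by rw [norm_mul, hlam1, one_mul]
    rw [← htrent, mul_add, Complex.add_re] at hsum
    linarith
  obtain ⟨i, hi⟩ := hlow
  have hMi : 2 - rr ≤ ‖(f (R - lam • U)) (EuclideanSpace.single i 1)‖^2 := by
    rw [hN lam hlam1, EuclideanSpace.norm_single, norm_one]
    nlinarith
  have hlower : Real.sqrt (2 - rr) ≤ ‖f (R - lam • U)‖ := by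
    calc Real.sqrt (2 - rr) ≤ Real.sqrt (‖(f (R - lam • U)) (EuclideanSpace.single i 1)‖^2) :=
          Real.sqrt_le_sqrt hMi
    _ = ‖(f (R - lam • U)) (EuclideanSpace.single i 1)‖ := Real.sqrt_sq (norm_nonneg _)
    _ ≤ ‖f (R - lam • U)‖ * ‖EuclideanSpace.single i (1:ℂ)‖ := ContinuousLinearMap.le_opNorm _ _
    _ = ‖f (R - lam • U)‖ := by rw [EuclideanSpace.norm_single, norm_one, mul_one]
  exact ⟨n, by rw [← hμexp]; exact hupper.trans (hlower.trans hlam)⟩
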